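/- For every real z with |z| < 1: the series ∑_{m≥1} H^alt_m·z^m converges to −log(1+z)/(1−z), and the series ∑_{m≥1} (H^alt_{m−1}/m)·z^m converges to L₂(z) = −∫₀^z log(1+t)/(1−t) dt. -/

import Mathlib

open Finset

/-- Alternating harmonic numbers `H^alt_n = ∑_{k=1}^n (-1)^k/k` (so `H^alt_0 = 0`). -/
noncomputable def Halt (n : ℕ) : ℝ := ∑ k ∈ Finset.Icc 1 n, (-1 : ℝ) ^ k / k

/-- `L₂(z) = −∫₀^z log(1+t)/(1−t) dt`. -/
noncomputable def L2 (z : ℝ) : ℝ := -∫ t in (0 : ℝ)..z, Real.log (1 + t) / (1 - t)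

lemma Halt_eq_range (n : ℕ) : Halt n = ∑ k ∈ Finset.range (n + 1), (-1 : ℝ) ^ k / k := by
  induction n with
  | zero => simp [Halt]
  | succ n ih =>
    rw [Halt, Finset.sum_Icc_succ_top (by omega), ← Halt, ih]
    exact (Finset.sum_range_succ _ _).symm

lemma Halt_abs_le (n : ℕ) : |Halt n| ≤ n := by
  calc |Halt n| ≤ ∑ k ∈ Finset.Icc 1 n, |(-1 : ℝ) ^ k / k| := Finset.abs_sum_le_sum_abs _ _
    _ ≤ ∑ k ∈ Finset.Icc 1 n, 1 := by
        apply Finset.sum_le_sum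
        intro k hk
        have hk1 : 1 ≤ k := (Finset.mem_Icc.mp hk).1
        rw [abs_div, abs_pow, abs_neg, abs_one, one_pow, Nat.abs_cast]
        rw [div_le_one (by exact_mod_cast hk1)]
        exact_mod_cast hk1
    _ ≤ n := by simp [Nat.card_Icc]

lemma part1 (z : ℝ) (hz : |z| < 1) :
    HasSum (fun m : ℕ => Halt m * z ^ m) (-(Real.log (1 + z)) / (1 - z)) := by
  set f : ℕ → ℝ := fun k => (-z) ^ k / k with hf_def
  have hzn : |(-z)| < 1 := by rwa [abs_neg]
  have hf : HasSum f (-Real.log (1 + z)) := by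
    have h := Real.hasSum_pow_div_log_of_abs_lt_one hzn
    have h' : HasSum (fun n => f (n + 1)) (-Real.log (1 + z)) := by
      have : (1 : ℝ) - -z = 1 + z := by ring
      rw [this] at h
      refine h.congr_fun fun n => ?_
      simp [hf_def]
    have := (hasSum_nat_add_iff 1).mp h'
    simpa [hf_def] using this
  have hg : HasSum (fun n : ℕ => z ^ n) (1 - z)⁻¹ := hasSum_geometric_of_abs_lt_one hz
  have hfn : Summable fun k => ‖f k‖ := by
    apply Summable.of_nonneg_of_le (fun k => norm_nonneg _) (fun k => ?_)
      (summable_geometric_of_lt_one (abs_nonneg z) hz)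
    rcases Nat.eq_zero_or_pos k with rfl | hk
    · simp [hf_def]
    · rw [hf_def]
      simp only [Real.norm_eq_abs, abs_div, abs_pow, abs_neg, Nat.abs_cast]
      rw [div_le_iff₀ (by exact_mod_cast hk)]
      nlinarith [pow_nonneg (abs_nonneg z) k, (by exact_mod_cast hk : (1:ℝ) ≤ k)]
  have hgn : Summable fun n : ℕ => ‖z ^ n‖ := by
    simpa [abs_pow] using summable_geometric_of_lt_one (abs_nonneg z) hz
  have key : ∀ n : ℕ, (∑ kl ∈ Finset.HasAntidiagonal.antidiagonal n, f kl.1 * z ^ kl.2) = Halt n * z ^ n := by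
    intro n
    rw [Finset.Nat.sum_antidiagonal_eq_sum_range_succ_mk, Halt_eq_range, Finset.sum_mul]
    refine Finset.sum_congr rfl fun k hk => ?_
    have hkn : k ≤ n := Nat.lt_succ_iff.mp (Finset.mem_range.mp hk)
    rw [hf_def]
    simp only
    rw [neg_pow, div_mul_eq_mul_div, div_mul_eq_mul_div, mul_assoc, ← pow_add,
      Nat.add_sub_cancel' hkn]
  have hsum : Summable fun n => ∑ kl ∈ Finset.HasAntidiagonal.antidiagonal n, f kl.1 * z ^ kl.2 :=
    summable_sum_mul_antidiagonal_of_summable_mul (summable_mul_of_summable_norm hfn hgn)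
  have h3 := hsum.hasSum
  rw [← tsum_mul_tsum_eq_tsum_sum_antidiagonal_of_summable_norm hfn hgn] at h3
  rw [hf.tsum_eq, hg.tsum_eq] at h3
  simp only [key] at h3
  rwa [← div_eq_mul_inv] at h3

/-- For `|z| < 1`, `∑_{m≥1} H^alt_m·z^m = −log(1+z)/(1−z)` and
`∑_{m≥1} (H^alt_{m−1}/m)·z^m = L₂(z)`.  (Both summands vanish at `m = 0`, so the
sums are taken over all of `ℕ`.) -/
theorem alt_harmonic_gf (z : ℝ) (hz : |z| < 1) :
    HasSum (fun m : ℕ => Halt m * z ^ m) (-(Real.log (1 + z)) / (1 - z)) ∧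
    HasSum (fun m : ℕ => Halt (m - 1) / (m : ℝ) * z ^ m) (L2 z) := by
  refine ⟨part1 z hz, ?_⟩
  have habs : ∀ t ∈ Set.uIoc (0 : ℝ) z, |t| ≤ |z| := by
    intro t ht
    rcases Set.mem_uIoc.mp ht with h | h
    · rw [abs_of_pos h.1]
      exact h.2.trans (le_abs_self z)
    · rw [abs_of_nonpos h.2]
      have h3 : -z ≤ |z| := neg_le_abs z
      linarith [h.1]
  have hint : HasSum (fun n : ℕ => ∫ t in (0:ℝ)..z, Halt n * t ^ n)
      (∫ t in (0:ℝ)..z, -(Real.log (1 + t)) / (1 - t)) := by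
    apply intervalIntegral.hasSum_integral_of_dominated_convergence
      (F := fun (n : ℕ) (t : ℝ) => Halt n * t ^ n) (fun n _ => (n : ℝ) * |z| ^ n)
    · intro n
      exact (Continuous.aestronglyMeasurable (by continuity))
    · intro n
      filter_upwards with t ht
      have h1 := habs t ht
      rw [Real.norm_eq_abs, abs_mul, abs_pow]
      have : |Halt n| * |t| ^ n ≤ (n : ℝ) * |z| ^ n := by
        apply mul_le_mul (Halt_abs_le n) (pow_le_pow_left₀ (abs_nonneg t) h1 n)
          (pow_nonneg (abs_nonneg t) n) (Nat.cast_nonneg n)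
      exact this
    · filter_upwards with t _
      simpa using summable_pow_mul_geometric_of_norm_lt_one 1
        (r := |z|) (by rwa [Real.norm_eq_abs, abs_abs])
    · exact intervalIntegrable_const
    · filter_upwards with t ht
      exact part1 t (lt_of_le_of_lt (habs t ht) hz)
  have heq : ∀ n : ℕ, (∫ t in (0:ℝ)..z, Halt n * t ^ n) = Halt n * (z ^ (n + 1) / (n + 1)) := by
    intro n
    rw [intervalIntegral.integral_const_mul, integral_pow]
    norm_num
  have hL2 : (∫ t in (0:ℝ)..z, -(Real.log (1 + t)) / (1 - t)) = L2 z := by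
    rw [L2, ← intervalIntegral.integral_neg]
    congr 1
    ext t
    rw [neg_div]
  rw [hL2] at hint
  simp only [heq] at hint
  have h2' : HasSum (fun n : ℕ => Halt ((n + 1) - 1) / ((n + 1 : ℕ) : ℝ) * z ^ (n + 1)) (L2 z) := by
    refine hint.congr_fun fun n => ?_
    simp only [Nat.add_sub_cancel]
    push_cast
    ring
  have := (hasSum_nat_add_iff (f := fun m : ℕ => Halt (m - 1) / (m : ℝ) * z ^ m) 1).mp h2'
  simpa using this
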